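/- Let Q be holomorphic on an open neighborhood of the closed unit disc. Then ∫₀^{2π} conj(Q(e^{iψ})) · (d/dψ)[Q(e^{iψ})] dψ = 2i ∬_𝔻 |Q′(w)|² dA(w), where dA is Lebesgue area measure on the open unit disc 𝔻. -/

import Mathlib

open MeasureTheory Real

/-- The `n`-th Fourier coefficient of a `2π`-periodic function `f : ℝ → ℝ`. -/
noncomputable def fourierC (f : ℝ → ℝ) (n : ℤ) : ℂ :=
  (1 / (2 * π)) * ∫ θ in (0:ℝ)..(2 * π), (f θ : ℂ) * Complex.exp (-Complex.I * (n : ℂ) * (θ : ℂ))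

/-- The Hilbert transform on the circle, sending `Σ cₙ e^{inθ}` to `Σ (−i sgn n) cₙ e^{inθ}`. -/
noncomputable def hilbertT (f : ℝ → ℝ) (θ : ℝ) : ℝ :=
  (∑' n : ℤ, -Complex.I * ((n.sign : ℤ) : ℂ) * fourierC f n *
    Complex.exp (Complex.I * (n : ℂ) * (θ : ℂ))).re

open Set

open MeasureTheory Real Set

noncomputable def cexp (ψ : ℝ) : ℂ := Complex.exp (Complex.I * ψ)

noncomputable def pt (r ψ : ℝ) : ℂ := (r : ℂ) * cexp ψ

lemma abs_cexp (ψ : ℝ) : ‖cexp ψ‖ = 1 := by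
  simp [cexp, Complex.norm_exp]

lemma conj_cexp_mul (ψ : ℝ) : (starRingEnd ℂ) (cexp ψ) * cexp ψ = 1 := by
  have := Complex.normSq_eq_norm_sq (cexp ψ)
  rw [abs_cexp] at this
  rw [← Complex.normSq_eq_conj_mul_self, this]
  norm_num

lemma cexp_continuous : Continuous cexp := by unfold cexp; fun_prop

lemma cexp_hasDerivAt (ψ : ℝ) : HasDerivAt cexp (Complex.I * cexp ψ) ψ := by
  have h1 : HasDerivAt (fun z : ℂ => Complex.I * z) Complex.I (ψ : ℂ) := by
    simpa using (hasDerivAt_id (ψ : ℂ)).const_mul Complex.I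
  have h2 : HasDerivAt (fun z : ℂ => Complex.exp (Complex.I * z))
      (Complex.exp (Complex.I * ψ) * Complex.I) (ψ : ℂ) := by
    exact (Complex.hasDerivAt_exp (Complex.I * ψ)).comp (ψ : ℂ) h1
  have := h2.comp_ofReal
  show HasDerivAt (fun ψ : ℝ => Complex.exp (Complex.I * ψ)) (Complex.I * Complex.exp (Complex.I * ψ)) ψ
  rw [show Complex.I * Complex.exp (Complex.I * ψ) = Complex.exp (Complex.I * ψ) * Complex.I from mul_comm _ _]
  exact this

lemma pt_mem_closedBall {r : ℝ} (hr : r ∈ Icc (0:ℝ) 1) (ψ : ℝ) :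
    pt r ψ ∈ Metric.closedBall (0:ℂ) 1 := by
  simp only [Metric.mem_closedBall, dist_zero_right, pt, norm_mul, Complex.norm_real]
  have : ‖cexp ψ‖ = 1 := abs_cexp ψ
  rw [this, mul_one, Real.norm_eq_abs, abs_of_nonneg hr.1]
  exact hr.2

lemma cexp_two_pi : cexp (2 * π) = 1 := by
  rw [cexp]
  push_cast
  rw [mul_comm]
  exact Complex.exp_two_pi_mul_I

lemma cexp_zero : cexp 0 = 1 := by simp [cexp]

lemma cexp_periodic : Function.Periodic cexp (2 * π) := by
  intro x
  rw [cexp, cexp]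
  push_cast
  rw [mul_add, Complex.exp_add, mul_comm Complex.I (2 * (π:ℂ)), Complex.exp_two_pi_mul_I, mul_one]

lemma norm_pt (r ψ : ℝ) : ‖pt r ψ‖ = |r| := by
  rw [pt, norm_mul, Complex.norm_real]
  have : ‖cexp ψ‖ = 1 := abs_cexp ψ
  rw [this, mul_one, Real.norm_eq_abs]

lemma polar_symm_eq (p : ℝ × ℝ) : Complex.polarCoord.symm p = pt p.1 p.2 := by
  rw [Complex.polarCoord_symm_apply, pt, cexp, mul_comm Complex.I, Complex.exp_mul_I]
  push_cast
  ring

lemma pt_periodic (r : ℝ) : Function.Periodic (fun ψ => pt r ψ) (2 * π) := by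
  intro x
  simp only [pt, cexp_periodic x]

section Deriv

variable {U : Set ℂ} (hU : IsOpen U) (hsub : Metric.closedBall (0:ℂ) 1 ⊆ U)
  {f : ℂ → ℂ} (hf : DifferentiableOn ℂ f U)

include hU hsub hf

omit hsub in
lemma hasDerivAt_of_mem {z : ℂ} (hz : z ∈ U) : HasDerivAt f (deriv f z) z :=
  (hf.differentiableAt (hU.mem_nhds hz)).hasDerivAt

lemma hasDerivAt_psi {r : ℝ} (hr : r ∈ Icc (0:ℝ) 1) (ψ : ℝ) :
    HasDerivAt (fun ψ : ℝ => f (pt r ψ)) (deriv f (pt r ψ) * (Complex.I * r * cexp ψ)) ψ := by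
  have hmem : pt r ψ ∈ U := hsub (pt_mem_closedBall hr ψ)
  have h1 : HasDerivAt (fun z : ℂ => Complex.I * z) Complex.I (ψ : ℂ) := by
    simpa using (hasDerivAt_id (ψ : ℂ)).const_mul Complex.I
  have h2 : HasDerivAt (fun z : ℂ => Complex.exp (Complex.I * z))
      (Complex.exp (Complex.I * ψ) * Complex.I) (ψ : ℂ) := by
    exact (Complex.hasDerivAt_exp (Complex.I * ψ)).comp (ψ : ℂ) h1
  have h3 : HasDerivAt (fun z : ℂ => (r : ℂ) * Complex.exp (Complex.I * z))
      ((r : ℂ) * (Complex.exp (Complex.I * ψ) * Complex.I)) (ψ : ℂ) := h2.const_mul _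
  have h4 : HasDerivAt f (deriv f (pt r ψ))
      ((fun z : ℂ => (r : ℂ) * Complex.exp (Complex.I * z)) (ψ:ℂ)) := by
    simpa [pt, cexp] using hasDerivAt_of_mem hU hf hmem
  have h5 := (h4.comp (ψ : ℂ) h3).comp_ofReal
  have heq : (fun y : ℝ => (f ∘ fun z : ℂ => (r : ℂ) * Complex.exp (Complex.I * z)) (y : ℂ))
      = fun ψ : ℝ => f (pt r ψ) := by
    funext y; simp [Function.comp, pt, cexp]
  rw [heq] at h5
  convert h5 using 1
  unfold pt cexp
  ring

lemma hasDerivAt_rad {r : ℝ} (hr : r ∈ Icc (0:ℝ) 1) (ψ : ℝ) :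
    HasDerivAt (fun r : ℝ => f (pt r ψ)) (deriv f (pt r ψ) * cexp ψ) r := by
  have hmem : pt r ψ ∈ U := hsub (pt_mem_closedBall hr ψ)
  have h1 : HasDerivAt (fun w : ℂ => w * cexp ψ) (cexp ψ) (r : ℂ) := hasDerivAt_mul_const _
  have h4 : HasDerivAt f (deriv f (pt r ψ)) ((fun w : ℂ => w * cexp ψ) (r : ℂ)) := by
    simpa [pt] using hasDerivAt_of_mem hU hf hmem
  have h5 := (h4.comp (r : ℂ) h1).comp_ofReal
  simpa [Function.comp, pt] using h5

/-- General continuity of `x ↦ f (pt (a x) (b x))`. -/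
lemma continuousOn_comp_pt {α : Type*} [TopologicalSpace α] {s : Set α} {a b : α → ℝ}
    (ha : ContinuousOn a s) (hb : ContinuousOn b s) (hrange : ∀ x ∈ s, a x ∈ Icc (0:ℝ) 1) :
    ContinuousOn (fun x => f (pt (a x) (b x))) s := by
  have hin : ContinuousOn (fun x => pt (a x) (b x)) s := by
    unfold pt
    exact (Complex.continuous_ofReal.comp_continuousOn ha).mul
      (cexp_continuous.comp_continuousOn hb)
  exact hf.continuousOn.comp hin (fun x hx => hsub (pt_mem_closedBall (hrange x hx) (b x)))

end Deriv

noncomputable def gfun (Q : ℂ → ℂ) (r ψ : ℝ) : ℂ :=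
  (starRingEnd ℂ) (Q (pt r ψ)) * (Complex.I * r * cexp ψ * deriv Q (pt r ψ))

noncomputable def gdrfun (Q : ℂ → ℂ) (r ψ : ℝ) : ℂ :=
  (starRingEnd ℂ) (deriv Q (pt r ψ) * cexp ψ) * (Complex.I * r * cexp ψ * deriv Q (pt r ψ)) +
  (starRingEnd ℂ) (Q (pt r ψ)) * (Complex.I * cexp ψ * deriv Q (pt r ψ) +
    Complex.I * r * cexp ψ * (deriv (deriv Q) (pt r ψ) * cexp ψ))

section Main

variable {Q : ℂ → ℂ} {U : Set ℂ} (hU : IsOpen U)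
  (hsub : Metric.closedBall (0:ℂ) 1 ⊆ U) (hQ : DifferentiableOn ℂ Q U)

include hU hsub hQ

lemma gfun_hasDerivAt {r : ℝ} (hr : r ∈ Icc (0:ℝ) 1) (ψ : ℝ) :
    HasDerivAt (fun r => gfun Q r ψ) (gdrfun Q r ψ) r := by
  have hQ1 : DifferentiableOn ℂ (deriv Q) U := (hQ.analyticOnNhd hU).deriv.differentiableOn
  have hu := (hasDerivAt_rad hU hsub hQ hr ψ).star
  have h0 : HasDerivAt (fun r : ℝ => (r : ℂ)) 1 r := by
    exact Complex.ofRealCLM.hasDerivAt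
  have hv1 : HasDerivAt (fun r : ℝ => Complex.I * (r : ℂ) * cexp ψ) (Complex.I * cexp ψ) r := by
    simpa using (h0.const_mul Complex.I).mul_const (cexp ψ)
  have hv := hv1.mul (hasDerivAt_rad hU hsub hQ1 hr ψ)
  have h := hu.mul hv
  simp only [← starRingEnd_apply] at h
  exact h

/-- General continuity of `x ↦ gdrfun Q (a x) (b x)`. -/
lemma gdrfun_continuousOn {α : Type*} [TopologicalSpace α] {s : Set α} {a b : α → ℝ}
    (ha : ContinuousOn a s) (hb : ContinuousOn b s) (hrange : ∀ x ∈ s, a x ∈ Icc (0:ℝ) 1) :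
    ContinuousOn (fun x => gdrfun Q (a x) (b x)) s := by
  have hQ1 : DifferentiableOn ℂ (deriv Q) U := (hQ.analyticOnNhd hU).deriv.differentiableOn
  have hQ2 : DifferentiableOn ℂ (deriv (deriv Q)) U :=
    (hQ.analyticOnNhd hU).deriv.deriv.differentiableOn
  have c0 := continuousOn_comp_pt hU hsub hQ ha hb hrange
  have c1 := continuousOn_comp_pt hU hsub hQ1 ha hb hrange
  have c2 := continuousOn_comp_pt hU hsub hQ2 ha hb hrange
  have hce : ContinuousOn (fun x => cexp (b x)) s := cexp_continuous.comp_continuousOn hb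
  have hrr : ContinuousOn (fun x => ((a x : ℝ) : ℂ)) s :=
    Complex.continuous_ofReal.comp_continuousOn ha
  unfold gdrfun
  apply ContinuousOn.add
  · exact ((c1.mul hce).star).mul (((continuousOn_const.mul hrr).mul hce).mul c1)
  · exact (c0.star).mul (((continuousOn_const.mul hce).mul c1).add
      (((continuousOn_const.mul hrr).mul hce).mul (c2.mul hce)))

lemma gfun_eq_integral_gdrfun (ψ : ℝ) :
    gfun Q 1 ψ = ∫ r in (0:ℝ)..1, gdrfun Q r ψ := by
  have h0 : gfun Q 0 ψ = 0 := by simp [gfun]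
  have hint : IntervalIntegrable (fun r => gdrfun Q r ψ) volume 0 1 := by
    apply ContinuousOn.intervalIntegrable
    rw [uIcc_of_le zero_le_one]
    exact gdrfun_continuousOn hU hsub hQ (continuousOn_id) (continuousOn_const)
      (fun r hr => hr)
  have h := intervalIntegral.integral_eq_sub_of_hasDerivAt
    (f := fun r => gfun Q r ψ) (f' := fun r => gdrfun Q r ψ)
    (fun t ht => gfun_hasDerivAt hU hsub hQ (by rwa [uIcc_of_le zero_le_one] at ht) ψ) hint
  simpa [h0] using h.symm


omit hU hsub hQ in
lemma conj_norm_sq (a : ℂ) : a * (starRingEnd ℂ) a = ((‖a‖ ^ 2 : ℝ) : ℂ) := by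
  rw [Complex.mul_conj']
  norm_cast

lemma inner_integral {r : ℝ} (hr : r ∈ Icc (0:ℝ) 1) :
    (∫ ψ in (0:ℝ)..(2 * π), gdrfun Q r ψ)
      = 2 * Complex.I * r *
        ((∫ ψ in (0:ℝ)..(2 * π), ‖deriv Q (pt r ψ)‖ ^ 2 : ℝ) : ℂ) := by
  have hQ1 : DifferentiableOn ℂ (deriv Q) U := (hQ.analyticOnNhd hU).deriv.differentiableOn
  have hQ2 : DifferentiableOn ℂ (deriv (deriv Q)) U :=
    (hQ.analyticOnNhd hU).deriv.deriv.differentiableOn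
  -- continuity of building blocks in ψ
  have cc0 : Continuous (fun ψ : ℝ => Q (pt r ψ)) := by
    rw [← continuousOn_univ]
    exact continuousOn_comp_pt hU hsub hQ continuousOn_const continuousOn_id (fun _ _ => hr)
  have cc1 : Continuous (fun ψ : ℝ => deriv Q (pt r ψ)) := by
    rw [← continuousOn_univ]
    exact continuousOn_comp_pt hU hsub hQ1 continuousOn_const continuousOn_id (fun _ _ => hr)
  have cc2 : Continuous (fun ψ : ℝ => deriv (deriv Q) (pt r ψ)) := by
    rw [← continuousOn_univ]
    exact continuousOn_comp_pt hU hsub hQ2 continuousOn_const continuousOn_id (fun _ _ => hr)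
  -- the A part
  have hAcont : Continuous (fun ψ : ℝ =>
      (starRingEnd ℂ) (deriv Q (pt r ψ) * cexp ψ) *
        (Complex.I * r * cexp ψ * deriv Q (pt r ψ))) :=
    ((cc1.mul cexp_continuous).star).mul
      (((continuous_const.mul cexp_continuous)).mul cc1)
  have hBcont : Continuous (fun ψ : ℝ =>
      (starRingEnd ℂ) (Q (pt r ψ)) * (Complex.I * cexp ψ * deriv Q (pt r ψ) +
        Complex.I * r * cexp ψ * (deriv (deriv Q) (pt r ψ) * cexp ψ))) :=
    (cc0.star).mul (((continuous_const.mul cexp_continuous).mul cc1).add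
      (((continuous_const.mul cexp_continuous)).mul (cc2.mul cexp_continuous)))
  have hsplit : (∫ ψ in (0:ℝ)..(2 * π), gdrfun Q r ψ)
      = (∫ ψ in (0:ℝ)..(2 * π), (starRingEnd ℂ) (deriv Q (pt r ψ) * cexp ψ) *
          (Complex.I * r * cexp ψ * deriv Q (pt r ψ)))
        + ∫ ψ in (0:ℝ)..(2 * π), (starRingEnd ℂ) (Q (pt r ψ)) *
            (Complex.I * cexp ψ * deriv Q (pt r ψ) +
              Complex.I * r * cexp ψ * (deriv (deriv Q) (pt r ψ) * cexp ψ)) := by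
    unfold gdrfun
    exact intervalIntegral.integral_add (hAcont.intervalIntegrable 0 (2 * π)) (hBcont.intervalIntegrable 0 (2 * π))
  -- value of the A part
  have hA : (∫ ψ in (0:ℝ)..(2 * π), (starRingEnd ℂ) (deriv Q (pt r ψ) * cexp ψ) *
          (Complex.I * r * cexp ψ * deriv Q (pt r ψ)))
      = Complex.I * r * ((∫ ψ in (0:ℝ)..(2 * π), ‖deriv Q (pt r ψ)‖ ^ 2 : ℝ) : ℂ) := by
    rw [intervalIntegral.integral_congr (g := fun ψ : ℝ =>
        Complex.I * (r:ℂ) * ((‖deriv Q (pt r ψ)‖ ^ 2 : ℝ) : ℂ)) (fun ψ _ => by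
      rw [map_mul]
      have hb := conj_cexp_mul ψ
      have ha := conj_norm_sq (deriv Q (pt r ψ))
      linear_combination (Complex.I * (r:ℂ) *
        (deriv Q (pt r ψ) * (starRingEnd ℂ) (deriv Q (pt r ψ)))) * hb
        + Complex.I * (r:ℂ) * ha)]
    rw [intervalIntegral.integral_const_mul, intervalIntegral.integral_ofReal]
  -- the B part via integration by parts
  have hB : (∫ ψ in (0:ℝ)..(2 * π), (starRingEnd ℂ) (Q (pt r ψ)) *
            (Complex.I * cexp ψ * deriv Q (pt r ψ) +
              Complex.I * r * cexp ψ * (deriv (deriv Q) (pt r ψ) * cexp ψ)))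
      = Complex.I * r * ((∫ ψ in (0:ℝ)..(2 * π), ‖deriv Q (pt r ψ)‖ ^ 2 : ℝ) : ℂ) := by
    have hu : ∀ ψ ∈ uIcc (0:ℝ) (2 * π), HasDerivAt (fun ψ => (starRingEnd ℂ) (Q (pt r ψ)))
        ((starRingEnd ℂ) (deriv Q (pt r ψ) * (Complex.I * r * cexp ψ))) ψ := by
      intro ψ _
      have := (hasDerivAt_psi hU hsub hQ hr ψ).star
      simpa [← starRingEnd_apply] using this
    have hv : ∀ ψ ∈ uIcc (0:ℝ) (2 * π), HasDerivAt (fun ψ => cexp ψ * deriv Q (pt r ψ))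
        (Complex.I * cexp ψ * deriv Q (pt r ψ) +
          cexp ψ * (deriv (deriv Q) (pt r ψ) * (Complex.I * r * cexp ψ))) ψ := by
      intro ψ _
      exact (cexp_hasDerivAt ψ).mul (hasDerivAt_psi hU hsub hQ1 hr ψ)
    have hu'int : IntervalIntegrable (fun ψ =>
        (starRingEnd ℂ) (deriv Q (pt r ψ) * (Complex.I * r * cexp ψ))) volume 0 (2 * π) :=
      ((cc1.mul (continuous_const.mul cexp_continuous)).star).intervalIntegrable _ _
    have hv'int : IntervalIntegrable (fun ψ =>
        Complex.I * cexp ψ * deriv Q (pt r ψ) +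
          cexp ψ * (deriv (deriv Q) (pt r ψ) * (Complex.I * r * cexp ψ))) volume 0 (2 * π) :=
      (((continuous_const.mul cexp_continuous).mul cc1).add
        (cexp_continuous.mul (cc2.mul (continuous_const.mul cexp_continuous)))).intervalIntegrable _ _
    have hibp := intervalIntegral.integral_mul_deriv_eq_deriv_mul hu hv hu'int hv'int
    -- rewrite the integrand into u * v'
    rw [intervalIntegral.integral_congr (g := fun ψ : ℝ =>
        (starRingEnd ℂ) (Q (pt r ψ)) * (Complex.I * cexp ψ * deriv Q (pt r ψ) +
          cexp ψ * (deriv (deriv Q) (pt r ψ) * (Complex.I * r * cexp ψ))))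
      (fun ψ _ => by ring)]
    rw [hibp]
    have hpt2 : pt r (2 * π) = pt r 0 := by rw [pt, pt, cexp_two_pi, cexp_zero]
    have hc2 : cexp (2 * π) = cexp 0 := by rw [cexp_two_pi, cexp_zero]
    rw [hpt2, hc2, sub_self, zero_sub]
    rw [intervalIntegral.integral_congr (g := fun ψ : ℝ =>
        -(Complex.I * (r:ℂ) * ((‖deriv Q (pt r ψ)‖ ^ 2 : ℝ) : ℂ))) (fun ψ _ => by
      rw [map_mul, map_mul, map_mul, Complex.conj_I, Complex.conj_ofReal]
      have hb := conj_cexp_mul ψ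
      have ha := conj_norm_sq (deriv Q (pt r ψ))
      linear_combination (-(Complex.I * (r:ℂ) *
        (deriv Q (pt r ψ) * (starRingEnd ℂ) (deriv Q (pt r ψ))))) * hb
        - Complex.I * (r:ℂ) * ha)]
    rw [intervalIntegral.integral_neg, neg_neg]
    rw [intervalIntegral.integral_const_mul, intervalIntegral.integral_ofReal]
  rw [hsplit, hA, hB]
  ring


lemma swap_integrals :
    (∫ ψ in (0:ℝ)..(2 * π), ∫ r in (0:ℝ)..1, gdrfun Q r ψ)
      = ∫ r in (0:ℝ)..1, ∫ ψ in (0:ℝ)..(2 * π), gdrfun Q r ψ := by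
  have h2π : (0:ℝ) ≤ 2 * π := by positivity
  rw [intervalIntegral.integral_of_le h2π, intervalIntegral.integral_of_le zero_le_one]
  simp_rw [intervalIntegral.integral_of_le zero_le_one,
    intervalIntegral.integral_of_le h2π]
  apply MeasureTheory.integral_integral_swap
  rw [Measure.prod_restrict, ← Measure.volume_eq_prod]
  apply MeasureTheory.IntegrableOn.mono_set (t := Icc (0:ℝ) (2*π) ×ˢ Icc (0:ℝ) 1)
  · apply ContinuousOn.integrableOn_compact (isCompact_Icc.prod isCompact_Icc)
    unfold Function.uncurry
    exact gdrfun_continuousOn hU hsub hQ (continuous_snd.continuousOn)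
      (continuous_fst.continuousOn) (fun p hp => hp.2)
  · exact Set.prod_mono Ioc_subset_Icc_self Ioc_subset_Icc_self

lemma area_eq :
    (∫ w in Metric.ball (0:ℂ) 1, ‖deriv Q w‖ ^ 2 : ℝ)
      = ∫ r in (0:ℝ)..1, r * (∫ ψ in (0:ℝ)..(2 * π), ‖deriv Q (pt r ψ)‖ ^ 2) := by
  have hQ1 : DifferentiableOn ℂ (deriv Q) U := (hQ.analyticOnNhd hU).deriv.differentiableOn
  have hF : ∀ p ∈ Ioi (0:ℝ) ×ˢ Ioo (-π) π,
      p.1 • (Metric.ball (0:ℂ) 1).indicator (fun w => ‖deriv Q w‖ ^ 2)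
        (Complex.polarCoord.symm p)
      = (Ioo (0:ℝ) 1 ×ˢ Ioo (-π) π).indicator
          (fun p : ℝ × ℝ => p.1 * ‖deriv Q (pt p.1 p.2)‖ ^ 2) p := by
    rintro ⟨r, θ⟩ ⟨hr, hθ⟩
    rw [polar_symm_eq]
    by_cases h1 : r < 1
    · rw [Set.indicator_of_mem, Set.indicator_of_mem]
      · rfl
      · exact ⟨⟨hr, h1⟩, hθ⟩
      · rw [Metric.mem_ball, dist_zero_right, norm_pt]
        rwa [abs_of_pos hr]
    · rw [Set.indicator_of_notMem, Set.indicator_of_notMem, smul_zero]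
      · intro hmem
        exact h1 hmem.1.2
      · rw [Metric.mem_ball, dist_zero_right, norm_pt, abs_of_pos hr]
        exact h1
  calc (∫ w in Metric.ball (0:ℂ) 1, ‖deriv Q w‖ ^ 2 : ℝ)
      = ∫ w, (Metric.ball (0:ℂ) 1).indicator (fun w => ‖deriv Q w‖ ^ 2) w :=
        (integral_indicator Metric.isOpen_ball.measurableSet).symm
    _ = ∫ p in polarCoord.target,
          p.1 • (Metric.ball (0:ℂ) 1).indicator (fun w => ‖deriv Q w‖ ^ 2)
            (Complex.polarCoord.symm p) :=
        (Complex.integral_comp_polarCoord_symm _).symm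
    _ = ∫ p in polarCoord.target, (Ioo (0:ℝ) 1 ×ˢ Ioo (-π) π).indicator
          (fun p : ℝ × ℝ => p.1 * ‖deriv Q (pt p.1 p.2)‖ ^ 2) p := by
        rw [polarCoord_target]
        exact setIntegral_congr_fun
          (measurableSet_Ioi.prod measurableSet_Ioo) hF
    _ = ∫ p in Ioo (0:ℝ) 1 ×ˢ Ioo (-π) π,
          p.1 * ‖deriv Q (pt p.1 p.2)‖ ^ 2 := by
        rw [setIntegral_indicator (measurableSet_Ioo.prod measurableSet_Ioo),
          polarCoord_target,
          Set.inter_eq_self_of_subset_right (Set.prod_mono Ioo_subset_Ioi_self (subset_refl _))]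
    _ = ∫ r in Ioo (0:ℝ) 1, ∫ θ in Ioo (-π) π, r * ‖deriv Q (pt r θ)‖ ^ 2 := by
        rw [Measure.volume_eq_prod]
        apply setIntegral_prod
        rw [← Measure.volume_eq_prod]
        apply MeasureTheory.IntegrableOn.mono_set (t := Icc (0:ℝ) 1 ×ˢ Icc (-π) π)
        · apply ContinuousOn.integrableOn_compact (isCompact_Icc.prod isCompact_Icc)
          exact (continuous_fst.continuousOn).mul
            (((continuousOn_comp_pt hU hsub hQ1 (continuous_fst.continuousOn)
              (continuous_snd.continuousOn) (fun p hp => hp.1)).norm).pow 2)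
        · exact Set.prod_mono Ioo_subset_Icc_self Ioo_subset_Icc_self
    _ = ∫ r in (0:ℝ)..1, r * (∫ ψ in (0:ℝ)..(2 * π), ‖deriv Q (pt r ψ)‖ ^ 2) := by
        rw [intervalIntegral.integral_of_le zero_le_one, integral_Ioc_eq_integral_Ioo]
        apply setIntegral_congr_fun measurableSet_Ioo
        intro r _
        show (∫ θ in Ioo (-π) π, r * ‖deriv Q (pt r θ)‖ ^ 2)
          = r * ∫ ψ in (0:ℝ)..(2 * π), ‖deriv Q (pt r ψ)‖ ^ 2
        rw [MeasureTheory.integral_const_mul]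
        congr 1
        have hper : Function.Periodic (fun θ : ℝ => ‖deriv Q (pt r θ)‖ ^ 2) (2 * π) := by
          intro x
          simp only [pt_periodic r x]
        have h1 := hper.intervalIntegral_add_eq (-π) 0
        rw [show -π + 2 * π = π by ring, zero_add] at h1
        rw [← h1, intervalIntegral.integral_of_le (by linarith [pi_pos] : -π ≤ π),
          integral_Ioc_eq_integral_Ioo]

end Main

/-- For `Q` holomorphic on a neighborhood of the closed unit disc,
`∫₀^{2π} conj(Q(e^{iψ})) (d/dψ)[Q(e^{iψ})] dψ = 2i ∬_𝔻 |Q′(w)|² dA`. -/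
theorem boundary_integral_eq_area_integral (Q : ℂ → ℂ) (U : Set ℂ) (hU : IsOpen U)
    (hsub : Metric.closedBall (0:ℂ) 1 ⊆ U) (hQ : DifferentiableOn ℂ Q U) :
    (∫ ψ in (0:ℝ)..(2 * π),
        (starRingEnd ℂ) (Q (Complex.exp (Complex.I * (ψ : ℂ)))) *
          deriv (fun x : ℝ => Q (Complex.exp (Complex.I * (x : ℂ)))) ψ)
      = 2 * Complex.I * ((∫ w in Metric.ball (0:ℂ) 1, ‖deriv Q w‖ ^ 2 : ℝ) : ℂ) := by
  have hone : (1:ℝ) ∈ Icc (0:ℝ) 1 := ⟨zero_le_one, le_refl 1⟩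
  have hLHS : ∀ ψ : ℝ, (starRingEnd ℂ) (Q (Complex.exp (Complex.I * (ψ : ℂ)))) *
      deriv (fun x : ℝ => Q (Complex.exp (Complex.I * (x : ℂ)))) ψ = gfun Q 1 ψ := by
    intro ψ
    have hd := hasDerivAt_psi hU hsub hQ hone ψ
    have heq : (fun x : ℝ => Q (Complex.exp (Complex.I * (x : ℂ)))) = fun x : ℝ => Q (pt 1 x) := by
      funext x
      rw [pt, cexp]
      norm_num
    rw [heq, hd.deriv]
    rw [show Complex.exp (Complex.I * (ψ : ℂ)) = pt 1 ψ by rw [pt, cexp]; norm_num]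
    unfold gfun
    push_cast
    ring
  rw [intervalIntegral.integral_congr (g := fun ψ => gfun Q 1 ψ) (fun ψ _ => hLHS ψ)]
  rw [intervalIntegral.integral_congr (g := fun ψ => ∫ r in (0:ℝ)..1, gdrfun Q r ψ)
    (fun ψ _ => gfun_eq_integral_gdrfun hU hsub hQ ψ)]
  rw [swap_integrals hU hsub hQ]
  rw [intervalIntegral.integral_congr (g := fun r : ℝ => 2 * Complex.I *
      (((r * (∫ ψ in (0:ℝ)..(2 * π), ‖deriv Q (pt r ψ)‖ ^ 2)) : ℝ) : ℂ))
    (fun r hr => by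
      rw [uIcc_of_le zero_le_one] at hr
      rw [inner_integral hU hsub hQ hr]
      push_cast
      ring)]
  rw [intervalIntegral.integral_const_mul, intervalIntegral.integral_ofReal,
    ← area_eq hU hsub hQ]
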